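/- Consider the massless (m = 0) rotating-BTZ pole-skipping momenta: at order 1, the pair k₁₁ = −i(1/√2 + 1), k₁₂ = −i(1/√2 − 1); at order 2, the quadruple −i√2, −i(√2 − 2), −i(√2 + 2), −i√2. Let E₁(k), E₁(k²) denote the elementary symmetric polynomials of degree 1, 2 of the order-1 pair, and E₂(k), E₂(k²), E₂(k³), E₂(k⁴) those of degree 1, 2, 3, 4 of the order-2 quadruple. Then E₁(k) = −√2·i, E₁(k²) = 1/2, E₂(k) = −4√2·i, E₂(k²) = −8, E₂(k³) = 0, E₂(k⁴) = −4, and these values satisfy the three constraints: 4 + E₁(k)² − 4·E₁(k²) = 0; 4·E₁(k)² + 8·E₁(k²) − E₂(k²) − 4 = 0; and E₂(k) − 4·E₁(k) = 0. -/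

import Mathlib

noncomputable section

open Complex

/-- `√2` as a complex number. -/
def sq2 : ℂ := (Real.sqrt 2 : ℂ)

/-- order-1 massless rotating-BTZ pole-skipping momenta -/
def k₁₁ : ℂ := -Complex.I * (1 / sq2 + 1)
def k₁₂ : ℂ := -Complex.I * (1 / sq2 - 1)

/-- order-2 massless rotating-BTZ pole-skipping momenta -/
def k₂₁ : ℂ := -Complex.I * sq2
def k₂₂ : ℂ := -Complex.I * (sq2 - 2)
def k₂₃ : ℂ := -Complex.I * (sq2 + 2)
def k₂₄ : ℂ := -Complex.I * sq2

/-- elementary symmetric polynomials of the order-1 pair -/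
def E₁k : ℂ := k₁₁ + k₁₂
def E₁k2 : ℂ := k₁₁ * k₁₂

/-- elementary symmetric polynomials of the order-2 quadruple -/
def E₂k : ℂ := k₂₁ + k₂₂ + k₂₃ + k₂₄
def E₂k2 : ℂ := k₂₁ * k₂₂ + k₂₁ * k₂₃ + k₂₁ * k₂₄ + k₂₂ * k₂₃ + k₂₂ * k₂₄ + k₂₃ * k₂₄
def E₂k3 : ℂ := k₂₁ * k₂₂ * k₂₃ + k₂₁ * k₂₂ * k₂₄ + k₂₁ * k₂₃ * k₂₄ + k₂₂ * k₂₃ * k₂₄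
def E₂k4 : ℂ := k₂₁ * k₂₂ * k₂₃ * k₂₄

/-- explicit values of the massless rotating-BTZ pole-skipping symmetric
polynomials and the three constraints they satisfy. -/
theorem btz_pole_skipping_values_and_constraints :
    E₁k = -sq2 * Complex.I
    ∧ E₁k2 = 1 / 2
    ∧ E₂k = -4 * sq2 * Complex.I
    ∧ E₂k2 = -8
    ∧ E₂k3 = 0
    ∧ E₂k4 = -4
    ∧ 4 + E₁k ^ 2 - 4 * E₁k2 = 0
    ∧ 4 * E₁k ^ 2 + 8 * E₁k2 - E₂k2 - 4 = 0
    ∧ E₂k - 4 * E₁k = 0 := by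
  have hs : sq2 ^ 2 = 2 := by
    rw [sq2, ← Complex.ofReal_pow, Real.sq_sqrt (by norm_num : (0:ℝ) ≤ 2)]
    norm_num
  have hne : sq2 ≠ 0 := by
    intro h; rw [h] at hs; norm_num at hs
  have hI : Complex.I ^ 2 = -1 := Complex.I_sq
  refine ⟨?_, ?_, ?_, ?_, ?_, ?_, ?_, ?_, ?_⟩ <;>
      simp only [E₁k, E₁k2, E₂k, E₂k2, E₂k3, E₂k4, k₁₁, k₁₂, k₂₁, k₂₂, k₂₃, k₂₄] <;>
      field_simp
  · linear_combination hs
  · linear_combination hs + (2 - 2 * sq2 ^ 2) * hI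
  · linear_combination (0 : ℂ) * hs
  · linear_combination (-6 : ℂ) * hs + (-4 + 6 * sq2 ^ 2) * hI
  · linear_combination (4 * Complex.I * sq2) * hs + (8 * Complex.I * sq2 - 4 * Complex.I * sq2 ^ 3) * hI
  · linear_combination (-2 + sq2 ^ 2) * hs + (4 * sq2 ^ 2 - sq2 ^ 4 - 4 * Complex.I ^ 2 * sq2 ^ 2 + Complex.I ^ 2 * sq2 ^ 4) * hI
  · linear_combination (4 * sq2 ^ 2) * hI
  · linear_combination (6 * sq2 ^ 2 + 12) * hs + (24 - 4 * sq2 ^ 2 - 6 * sq2 ^ 4) * hI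
  · linear_combination (-4 * Complex.I) * hs

end
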